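/- arXiv:2510.02513 — 3 statements merged into one kernel-verified Lean document; each statement's English description precedes it below -/
import Mathlib

section
/- Let X ∈ ℂ^{m×k} have full column rank with k ≤ m, let y ∈ ℂ^m, and let S be a random k-element subset drawn from the volume sampling distribution VS_k(X). Then the estimator β̂ = X(S,:)^{-1} y(S) is unbiased: E[β̂] = X† y, the least-squares solution. -/
open Matrix Finset

/-- The `k × n` submatrix of `B` consisting of the rows indexed by a `k`-element subset `S`. -/
noncomputable def rowSub {m n k : ℕ} (B : Matrix (Fin m) (Fin n) ℂ)
    (S : Finset (Fin m)) (hS : S.card = k) : Matrix (Fin k) (Fin n) ℂ :=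
  B.submatrix (fun i => ((S.orderIsoOfFin hS i : Fin m))) id

/-- The subvector of `y` consisting of the entries indexed by the `k`-element subset `S`. -/
noncomputable def vecSub {m k : ℕ} (y : Fin m → ℂ)
    (S : Finset (Fin m)) (hS : S.card = k) : Fin k → ℂ :=
  fun i => y (S.orderIsoOfFin hS i : Fin m)

namespace VSaux

variable {m k : ℕ}

noncomputable def eS (S : {S : Finset (Fin m) // S.card = k}) : Fin k → Fin m :=
  fun i => ((S.1.orderIsoOfFin S.2 i : Fin m))

lemma eS_injective (S : {S : Finset (Fin m) // S.card = k}) : Function.Injective (eS S) := by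
  intro a b h
  exact (S.1.orderIsoOfFin S.2).injective (Subtype.ext h)

lemma eS_mem (S : {S : Finset (Fin m) // S.card = k}) (i : Fin k) : eS S i ∈ S.1 :=
  (S.1.orderIsoOfFin S.2 i).2

lemma image_eS (S : {S : Finset (Fin m) // S.card = k}) :
    Finset.image (eS S) Finset.univ = S.1 := by
  apply Finset.eq_of_subset_of_card_le
  · intro a ha
    simp only [Finset.mem_image] at ha
    obtain ⟨i, _, rfl⟩ := ha
    exact eS_mem S i
  · rw [S.2, Finset.card_image_of_injective _ (eS_injective S)]
    simp

lemma image_eS_comp (S : {S : Finset (Fin m) // S.card = k}) (σ : Equiv.Perm (Fin k)) :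
    Finset.image (eS S ∘ σ) Finset.univ = S.1 := by
  rw [← Finset.image_image, Finset.image_univ_equiv, image_eS]

local notation "ε " σ:arg => ((Equiv.Perm.sign σ : ℤ) : ℂ)

theorem cauchy_binet (A : Matrix (Fin k) (Fin m) ℂ) (B : Matrix (Fin m) (Fin k) ℂ) :
    (A * B).det = ∑ S : {S : Finset (Fin m) // S.card = k},
      (A.submatrix id (eS S)).det * (B.submatrix (eS S) id).det := by
  classical
  have step1 : (A * B).det
      = ∑ p : Fin k → Fin m, ∑ σ : Equiv.Perm (Fin k), ε σ * ∏ i, A (σ i) (p i) * B (p i) i := by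
    simp only [det_apply', mul_apply, prod_univ_sum, mul_sum, Fintype.piFinset_univ]
    rw [Finset.sum_comm]
  have step2 : ∀ p : Fin k → Fin m,
      (∑ σ : Equiv.Perm (Fin k), ε σ * ∏ i, A (σ i) (p i) * B (p i) i)
        = (A.submatrix id p).det * ∏ i, B (p i) i := by
    intro p
    rw [det_apply', Finset.sum_mul]
    refine Finset.sum_congr rfl fun σ _ => ?_
    rw [Finset.prod_mul_distrib, mul_assoc]
    simp [submatrix_apply]
  rw [step1]
  simp_rw [step2]
  -- kill non-injective p
  rw [← Finset.sum_filter_of_ne (p := fun p : Fin k → Fin m => Function.Injective p)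
    (by
      intro p _ hp
      by_contra hinj
      apply hp
      obtain ⟨a, b, hab, hne⟩ : ∃ a b, p a = p b ∧ a ≠ b := by
        rw [Function.Injective] at hinj
        push_neg at hinj
        obtain ⟨a, b, h1, h2⟩ := hinj
        exact ⟨a, b, h1, h2⟩
      have : (A.submatrix id p).det = 0 :=
        det_zero_of_column_eq hne (fun r => by simp [submatrix_apply, hab])
      rw [this, zero_mul])]
  -- biject with pairs (S, σ)
  have := Finset.sum_bij
    (s := (Finset.univ : Finset ({S : Finset (Fin m) // S.card = k} × Equiv.Perm (Fin k))))
    (t := Finset.univ.filter (fun p : Fin k → Fin m => Function.Injective p))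
    (f := fun x => (A.submatrix id (eS x.1 ∘ x.2)).det * ∏ i, B ((eS x.1 ∘ x.2) i) i)
    (g := fun p => (A.submatrix id p).det * ∏ i, B (p i) i)
    (i := fun x _ => eS x.1 ∘ x.2)
    (hi := by
      intro x _
      simp only [Finset.mem_filter, Finset.mem_univ, true_and]
      exact (eS_injective x.1).comp x.2.injective)
    (i_inj := by
      rintro ⟨S₁, σ₁⟩ _ ⟨S₂, σ₂⟩ _ h
      have himg := congrArg (fun f : Fin k → Fin m => Finset.image f Finset.univ) h
      simp only [image_eS_comp] at himg
      obtain rfl : S₁ = S₂ := Subtype.ext himg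
      rw [Prod.mk.injEq]
      exact ⟨rfl, Equiv.ext fun i => eS_injective S₁ (congrFun h i)⟩)
    (i_surj := by
      intro p hp
      simp only [Finset.mem_filter, Finset.mem_univ, true_and] at hp
      set S : Finset (Fin m) := Finset.univ.image p with hSdef
      have hcard : S.card = k := by
        rw [hSdef, Finset.card_image_of_injective _ hp]
        simp
      have hmem : ∀ i, p i ∈ S := fun i => Finset.mem_image.2 ⟨i, Finset.mem_univ i, rfl⟩
      set g : Fin k → Fin k := fun i => (S.orderIsoOfFin hcard).symm ⟨p i, hmem i⟩ with hgdef
      have hg : Function.Injective g := by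
        intro a b hab
        apply hp
        have := congrArg (fun t => ((S.orderIsoOfFin hcard t : Fin m))) hab
        simpa [hgdef] using this
      refine ⟨⟨⟨S, hcard⟩, Equiv.ofBijective g ((Finite.injective_iff_bijective).1 hg)⟩,
        Finset.mem_univ _, ?_⟩
      funext i
      show eS ⟨S, hcard⟩ (g i) = p i
      simp [eS, hgdef]
    )
    (h := fun x _ => rfl)
  rw [← this]
  rw [Fintype.sum_prod_type]
  refine Finset.sum_congr rfl fun S _ => ?_
  have hsub : ∀ σ : Equiv.Perm (Fin k),
      A.submatrix id (eS S ∘ σ) = (A.submatrix id (eS S)).submatrix id σ := by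
    intro σ; ext a b; simp
  calc (∑ σ : Equiv.Perm (Fin k),
        (A.submatrix id (eS S ∘ σ)).det * ∏ i, B ((eS S ∘ σ) i) i)
      = ∑ σ : Equiv.Perm (Fin k),
        (A.submatrix id (eS S)).det * (ε σ * ∏ i, B ((eS S ∘ σ) i) i) := by
        refine Finset.sum_congr rfl fun σ _ => ?_
        rw [hsub, det_permute']
        push_cast
        ring
    _ = (A.submatrix id (eS S)).det * (B.submatrix (eS S) id).det := by
        rw [← Finset.mul_sum]
        congr 1
        rw [det_apply']
        refine Finset.sum_congr rfl fun σ _ => ?_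
        simp [Function.comp]

open scoped ComplexOrder in
lemma det_ne_zero_of_rank {m k : ℕ} (X : Matrix (Fin m) (Fin k) ℂ) (hX : X.rank = k) :
    (Xᴴ * X).det ≠ 0 := by
  intro h0
  obtain ⟨v, hv, hv0⟩ := Matrix.exists_mulVec_eq_zero_iff.mpr h0
  have hrank : (Xᴴ * X).rank = k := by rw [Matrix.rank_conjTranspose_mul_self, hX]
  have h1 := LinearMap.finrank_range_add_finrank_ker (Xᴴ * X).mulVecLin
  rw [show Module.finrank ℂ (Fin k → ℂ) = k by simp] at h1
  have hker : 0 < Module.finrank ℂ (LinearMap.ker (Xᴴ * X).mulVecLin) := by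
    rw [Module.finrank_pos_iff]
    refine nontrivial_of_ne ⟨v, by simpa using hv0⟩ 0 ?_
    intro he
    exact hv (by simpa using congrArg Subtype.val he)
  rw [Matrix.rank] at hrank
  omega

end VSaux

/-- Unbiasedness of volume-sampling active regression: if `S ~ VS_k(X)` (probability of `S`
proportional to `|det X(S,:)|²`), then the estimator `β̂ = X(S,:)⁻¹ y(S)` satisfies
`E[β̂] = X† y = (X*X)⁻¹X* y`, the least-squares solution (`X` has full column rank). -/
theorem volume_sampling_unbiased (m k : ℕ) (hk : k ≤ m)
    (X : Matrix (Fin m) (Fin k) ℂ) (hX : X.rank = k) (y : Fin m → ℂ) :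
    (∑ S : {S : Finset (Fin m) // S.card = k},
        (‖(rowSub X S.1 S.2).det‖ ^ 2 /
          (∑ R : {R : Finset (Fin m) // R.card = k},
            ‖(rowSub X R.1 R.2).det‖ ^ 2)) •
          ((rowSub X S.1 S.2)⁻¹ *ᵥ vecSub y S.1 S.2)) =
      (Xᴴ * X)⁻¹ *ᵥ (Xᴴ *ᵥ y) := by
  classical
  have hdet := VSaux.det_ne_zero_of_rank X hX
  have hrowSub : ∀ S : {S : Finset (Fin m) // S.card = k},
      rowSub X S.1 S.2 = X.submatrix (VSaux.eS S) id := fun _ => rfl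
  have hconj : ∀ S : {S : Finset (Fin m) // S.card = k},
      Xᴴ.submatrix id (VSaux.eS S) = (X.submatrix (VSaux.eS S) id)ᴴ := by
    intro S; ext a b; simp
  set D : ℝ := ∑ R : {R : Finset (Fin m) // R.card = k},
      ‖(rowSub X R.1 R.2).det‖ ^ 2 with hDdef
  have hDdet : ((D : ℝ) : ℂ) = (Xᴴ * X).det := by
    rw [VSaux.cauchy_binet Xᴴ X, hDdef, Complex.ofReal_sum]
    refine Finset.sum_congr rfl fun S _ => ?_
    rw [hconj, det_conjTranspose, hrowSub, Complex.sq_norm,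
      Complex.normSq_eq_conj_mul_self]
    rfl
  have hDne : ((D : ℝ) : ℂ) ≠ 0 := by rw [hDdet]; exact hdet
  funext j
  simp only [Finset.sum_apply, Pi.smul_apply, Complex.real_smul, Complex.ofReal_div]
  have key : ∀ S : {S : Finset (Fin m) // S.card = k},
      ((‖(rowSub X S.1 S.2).det‖ ^ 2 : ℝ) : ℂ) *
          ((rowSub X S.1 S.2)⁻¹ *ᵥ vecSub y S.1 S.2) j
        = (starRingEnd ℂ) ((rowSub X S.1 S.2).det) *
            Matrix.cramer (rowSub X S.1 S.2) (vecSub y S.1 S.2) j := by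
    intro S
    by_cases hdS : (rowSub X S.1 S.2).det = 0
    · simp [hdS]
    · rw [Matrix.inv_def, Ring.inverse_eq_inv, Matrix.smul_mulVec,
        ← Matrix.cramer_eq_adjugate_mulVec]
      simp only [Pi.smul_apply, smul_eq_mul]
      rw [Complex.sq_norm, Complex.normSq_eq_conj_mul_self]
      field_simp
  have hsum : (∑ S : {S : Finset (Fin m) // S.card = k},
      (starRingEnd ℂ) ((rowSub X S.1 S.2).det) *
        Matrix.cramer (rowSub X S.1 S.2) (vecSub y S.1 S.2) j)
      = Matrix.cramer (Xᴴ * X) (Xᴴ *ᵥ y) j := by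
    rw [Matrix.cramer_apply]
    have hupd : Xᴴ * (X.updateCol j y) = (Xᴴ * X).updateCol j (Xᴴ *ᵥ y) := by
      ext a b
      by_cases hb : b = j
      · subst hb
        simp [Matrix.mul_apply, Matrix.updateCol_apply, Matrix.mulVec, dotProduct]
      · simp [Matrix.mul_apply, Matrix.updateCol_apply, hb]
    rw [← hupd, VSaux.cauchy_binet]
    refine Finset.sum_congr rfl fun S _ => ?_
    rw [Matrix.cramer_apply]
    have h1 : (starRingEnd ℂ) ((rowSub X S.1 S.2).det) = (Xᴴ.submatrix id (VSaux.eS S)).det := by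
      rw [hconj, det_conjTranspose, hrowSub]
      rfl
    have h2 : ((rowSub X S.1 S.2).updateCol j (vecSub y S.1 S.2))
        = (X.updateCol j y).submatrix (VSaux.eS S) id := by
      ext a b
      by_cases hb : b = j
      · subst hb
        simp [Matrix.updateCol_apply, rowSub, vecSub, VSaux.eS]
      · simp [Matrix.updateCol_apply, rowSub, vecSub, hb, VSaux.eS]
    rw [h1, h2]
  have hinv : ((Xᴴ * X)⁻¹ *ᵥ (Xᴴ *ᵥ y)) j
      = ((Xᴴ * X).det)⁻¹ * Matrix.cramer (Xᴴ * X) (Xᴴ *ᵥ y) j := by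
    rw [Matrix.inv_def, Ring.inverse_eq_inv, Matrix.smul_mulVec,
      ← Matrix.cramer_eq_adjugate_mulVec]
    simp
  calc (∑ S : {S : Finset (Fin m) // S.card = k},
        ((‖(rowSub X S.1 S.2).det‖ ^ 2 : ℝ) : ℂ) / ((D : ℝ) : ℂ) *
          ((rowSub X S.1 S.2)⁻¹ *ᵥ vecSub y S.1 S.2) j)
      = ((D : ℝ) : ℂ)⁻¹ * ∑ S : {S : Finset (Fin m) // S.card = k},
          ((‖(rowSub X S.1 S.2).det‖ ^ 2 : ℝ) : ℂ) *
            ((rowSub X S.1 S.2)⁻¹ *ᵥ vecSub y S.1 S.2) j := by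
        rw [Finset.mul_sum]
        refine Finset.sum_congr rfl fun S _ => ?_
        ring
    _ = ((D : ℝ) : ℂ)⁻¹ * Matrix.cramer (Xᴴ * X) (Xᴴ *ᵥ y) j := by
        rw [← hsum]
        congr 1
        exact Finset.sum_congr rfl fun S _ => key S
    _ = ((Xᴴ * X)⁻¹ *ᵥ (Xᴴ *ᵥ y)) j := by
        rw [hinv, hDdet]
end

section
/- There exist a full-rank matrix X ∈ ℝ^{(k+1)×k} and a vector y ∈ ℝ^{k+1} such that for every k-element subset S of {1,...,k+1}, the submatrix X(S,:) is invertible and ‖X·X(S,:)^{-1}·y(S) − y‖² = (k+1)·‖(I − XX†)y‖². In particular the factor (k+1) in the volume-sampling active regression guarantee cannot be improved. -/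
open Matrix Finset

/-- The `k × n` submatrix of the rows of a real matrix indexed by a `k`-element subset `S`. -/
noncomputable def rowSubR {m n k : ℕ} (B : Matrix (Fin m) (Fin n) ℝ)
    (S : Finset (Fin m)) (hS : S.card = k) : Matrix (Fin k) (Fin n) ℝ :=
  B.submatrix (fun i => ((S.orderIsoOfFin hS i : Fin m))) id

/-- The subvector of `y` consisting of the entries indexed by the `k`-element subset `S`. -/
noncomputable def vecSubR {m k : ℕ} (y : Fin m → ℝ)
    (S : Finset (Fin m)) (hS : S.card = k) : Fin k → ℝ :=
  fun i => y (S.orderIsoOfFin hS i : Fin m)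

/-- The squared Euclidean norm of a real vector. -/
noncomputable def vecNormSqR {m : ℕ} (v : Fin m → ℝ) : ℝ :=
  ∑ i, (v i) ^ 2

/-- The hard-instance matrix: identity on top of a row of `-1`s. -/
def Xmat (k : ℕ) : Matrix (Fin (k + 1)) (Fin k) ℝ :=
  fun i j => if (i : ℕ) = (j : ℕ) then 1 else if (i : ℕ) = k then -1 else 0

lemma Xmat_row_sum (k : ℕ) (c : Fin (k + 1)) (v : Fin k → ℝ) :
    ∑ j, Xmat k c j * v j = if h : (c : ℕ) < k then v ⟨c, h⟩ else -∑ j, v j := by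
  by_cases h : (c : ℕ) < k
  · rw [dif_pos h]
    rw [Finset.sum_eq_single ⟨(c : ℕ), h⟩]
    · simp [Xmat]
    · intro j _ hj
      have : (c : ℕ) ≠ (j : ℕ) := by
        intro he; exact hj (Fin.ext he.symm)
      simp [Xmat, this, Nat.ne_of_lt h]
    · simp
  · have hc : (c : ℕ) = k := le_antisymm (Nat.lt_succ_iff.mp c.isLt) (le_of_not_gt h)
    rw [dif_neg h, ← Finset.sum_neg_distrib]
    apply Finset.sum_congr rfl
    intro j _
    have h1 : (c : ℕ) ≠ (j : ℕ) := by omega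
    have h2 : k ≠ (j : ℕ) := by have := j.isLt; omega
    simp [Xmat, h1, h2, hc]

lemma Xmat_mulVec (k : ℕ) (v : Fin k → ℝ) (c : Fin (k + 1)) :
    ((Xmat k) *ᵥ v) c = if h : (c : ℕ) < k then v ⟨c, h⟩ else -∑ j, v j := by
  rw [← Xmat_row_sum]; rfl

lemma beta_sum (k : ℕ) (m : Fin (k + 1)) :
    ∑ j : Fin k, (if (j : ℕ) = (m : ℕ) then -(k : ℝ) else 1) =
      if (m : ℕ) < k then -1 else (k : ℝ) := by
  by_cases h : (m : ℕ) < k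
  · rw [if_pos h]
    have heach : ∀ j : Fin k, (if (j : ℕ) = (m : ℕ) then -(k : ℝ) else 1) =
        (if j = ⟨(m : ℕ), h⟩ then (-(k : ℝ) - 1) else 0) + 1 := by
      intro j
      by_cases hj : j = ⟨(m : ℕ), h⟩
      · subst hj; simp
      · have : (j : ℕ) ≠ (m : ℕ) := fun he => hj (Fin.ext he)
        simp [hj, this]
    rw [Finset.sum_congr rfl (fun j _ => heach j), Finset.sum_add_distrib,
      Finset.sum_ite_eq' Finset.univ]
    simp
    ring
  · rw [if_neg h]
    have heach : ∀ j : Fin k, (if (j : ℕ) = (m : ℕ) then -(k : ℝ) else 1) = 1 := by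
      intro j
      have : (j : ℕ) ≠ (m : ℕ) := by have := j.isLt; omega
      simp [this]
    rw [Finset.sum_congr rfl (fun j _ => heach j)]
    simp

lemma inj_of_ker {a b : ℕ} (M : Matrix (Fin a) (Fin b) ℝ)
    (h : ∀ v, M *ᵥ v = 0 → v = 0) : Function.Injective M.mulVec := by
  intro x y hxy
  have := h (x - y) (by rw [Matrix.mulVec_sub, hxy, sub_self])
  exact sub_eq_zero.mp this

/-- Optimality of the factor `k+1`: there exist a full-rank `X ∈ ℝ^{(k+1)×k}` and
`y ∈ ℝ^{k+1}` such that for every `k`-subset `S`, `X(S,:)` is invertible and the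
active-regression residual equals `(k+1)` times the minimal one (with `X† = (XᵀX)⁻¹Xᵀ`). -/
theorem volume_sampling_factor_optimal (k : ℕ) :
    ∃ (X : Matrix (Fin (k + 1)) (Fin k) ℝ) (y : Fin (k + 1) → ℝ),
      X.rank = k ∧
      ∀ (S : Finset (Fin (k + 1))) (hS : S.card = k),
        IsUnit (rowSubR X S hS).det ∧
        vecNormSqR (X *ᵥ ((rowSubR X S hS)⁻¹ *ᵥ vecSubR y S hS) - y) =
          (k + 1) * vecNormSqR ((1 - X * (Xᵀ * X)⁻¹ * Xᵀ) *ᵥ y) := by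
  refine ⟨Xmat k, fun _ => 1, ?_, ?_⟩
  · -- rank
    have hinj : Function.Injective (Xmat k).mulVec := by
      apply inj_of_ker
      intro v hv
      funext j
      have h := congrFun hv (Fin.castSucc j)
      rw [Xmat_mulVec] at h
      have hj : ((Fin.castSucc j : Fin (k + 1)) : ℕ) < k := j.isLt
      rw [dif_pos hj] at h
      simpa using h
    have hinj' : Function.Injective (Xmat k).mulVecLin := hinj
    rw [Matrix.rank, LinearMap.finrank_range_of_inj hinj', Module.finrank_fin_fun]
  · intro S hS
    -- identify the missing index m
    have hc : Sᶜ.card = 1 := by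
      rw [Finset.card_compl, hS]
      simp
    obtain ⟨m, hm⟩ := Finset.card_eq_one.mp hc
    have hmem : ∀ x : Fin (k + 1), x ∈ S ↔ x ≠ m := by
      intro x
      have h1 : x ∉ S ↔ x = m := by rw [← Finset.mem_compl, hm, Finset.mem_singleton]
      constructor
      · intro hx he; exact (h1.mpr he) hx
      · intro hne; by_contra hx; exact hne (h1.mp hx)
    have key : ∀ i : Fin k, ((S.orderIsoOfFin hS i : Fin (k + 1))) = m.succAbove i := by
      intro i
      rw [Finset.coe_orderIsoOfFin_apply]
      have := Finset.orderEmbOfFin_unique hS (f := fun i => m.succAbove i)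
        (fun x => (hmem _).mpr (Fin.succAbove_ne m x)) (Fin.strictMono_succAbove m)
      exact (congrFun this i).symm
    set M := rowSubR (Xmat k) S hS with hMdef
    have hMmul : ∀ (v : Fin k → ℝ) (i : Fin k),
        (M *ᵥ v) i = ((Xmat k) *ᵥ v) (m.succAbove i) := by
      intro v i
      simp [hMdef, rowSubR, key, Matrix.mulVec, dotProduct]
    have hdet : IsUnit M.det := by
      rw [← Matrix.isUnit_iff_isUnit_det, ← Matrix.mulVec_injective_iff_isUnit]
      apply inj_of_ker
      intro v hv
      have hA : ∀ c : Fin (k + 1), c ≠ m → ((Xmat k) *ᵥ v) c = 0 := by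
        intro c hcm
        obtain ⟨i, hi⟩ := Fin.exists_succAbove_eq hcm
        rw [← hi, ← hMmul, hv]
        rfl
      funext j
      by_cases hjm : (Fin.castSucc j) = m
      · -- use the last row and all other coordinates
        have hml : Fin.last k ≠ m := by
          intro he
          have : (m : ℕ) = k := by rw [← he]; rfl
          have : (j : ℕ) = k := by rw [← hjm] at this; simpa using this
          exact absurd this (Nat.ne_of_lt j.isLt)
        have hlast := hA (Fin.last k) hml
        rw [Xmat_mulVec, dif_neg (by simp)] at hlast
        have hsum : ∑ j', v j' = 0 := by linarith [hlast]
        have hothers : ∀ j' : Fin k, j' ≠ j → v j' = 0 := by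
          intro j' hj'
          have hne : (Fin.castSucc j') ≠ m := by
            intro he
            apply hj'
            apply Fin.ext
            have : (j' : ℕ) = (m : ℕ) := by rw [← he]; rfl
            have h2 : (j : ℕ) = (m : ℕ) := by rw [← hjm]; rfl
            omega
          have := hA _ hne
          rw [Xmat_mulVec, dif_pos (show ((Fin.castSucc j' : Fin (k+1)) : ℕ) < k from j'.isLt)] at this
          simpa using this
        have : ∑ j', v j' = v j :=
          Finset.sum_eq_single j (fun b _ hb => hothers b hb) (by simp)
        rw [this] at hsum
        exact hsum
      · have := hA _ hjm
        rw [Xmat_mulVec, dif_pos (show ((Fin.castSucc j : Fin (k+1)) : ℕ) < k from j.isLt)] at this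
        simpa using this
    refine ⟨hdet, ?_⟩
    -- the interpolating coefficients
    set β : Fin k → ℝ := fun j => if (j : ℕ) = (m : ℕ) then -(k : ℝ) else 1 with hβ
    have hMβ : M *ᵥ β = fun _ => (1 : ℝ) := by
      funext i
      rw [hMmul, Xmat_mulVec]
      have hcm : m.succAbove i ≠ m := Fin.succAbove_ne m i
      by_cases h : ((m.succAbove i : Fin (k+1)) : ℕ) < k
      · rw [dif_pos h]
        have : ((m.succAbove i : Fin (k+1)) : ℕ) ≠ (m : ℕ) := fun he => hcm (Fin.ext he)
        simp [hβ, this]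
      · rw [dif_neg h]
        have hck : ((m.succAbove i : Fin (k+1)) : ℕ) = k := by
          have := (m.succAbove i).isLt; omega
        have hmk : (m : ℕ) < k := by
          have h2 : (m : ℕ) ≠ k := fun he => hcm (Fin.ext (by rw [hck, he]))
          have := m.isLt; omega
        simp only [hβ]
        rw [beta_sum, if_pos hmk]
        norm_num
    have hsolve : (M⁻¹ *ᵥ vecSubR (fun _ => (1 : ℝ)) S hS) = β := by
      have h1 : vecSubR (fun _ => (1 : ℝ)) S hS = fun _ => 1 := rfl
      rw [h1, ← hMβ, Matrix.mulVec_mulVec, Matrix.nonsing_inv_mul M hdet, Matrix.one_mulVec]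
    have hres : ((Xmat k) *ᵥ β - fun _ => (1 : ℝ)) =
        fun i => if i = m then -((k : ℝ) + 1) else 0 := by
      funext i
      simp only [Pi.sub_apply]
      rw [Xmat_mulVec]
      by_cases h : (i : ℕ) < k
      · rw [dif_pos h]
        simp only [hβ]
        by_cases him : (i : ℕ) = (m : ℕ)
        · rw [if_pos him, if_pos (Fin.ext him)]; ring
        · rw [if_neg him, if_neg (fun he => him (by rw [he]))]; ring
      · have hik : (i : ℕ) = k := by have := i.isLt; omega
        rw [dif_neg h]
        simp only [hβ]
        rw [beta_sum]
        by_cases hm : (m : ℕ) < k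
        · have hne : i ≠ m := by intro he; rw [he] at hik; omega
          rw [if_pos hm, if_neg hne]; norm_num
        · have him : (i : ℕ) = (m : ℕ) := by have := m.isLt; omega
          rw [if_neg hm, if_pos (Fin.ext him)]; push_cast; ring
    have hXty : (Xmat k)ᵀ *ᵥ (fun _ => (1 : ℝ)) = 0 := by
      funext j
      show ∑ i, (Xmat k)ᵀ j i * 1 = 0
      simp only [Matrix.transpose_apply, mul_one]
      rw [Fin.sum_univ_castSucc]
      have h1 : ∀ i : Fin k, Xmat k (Fin.castSucc i) j = if i = j then 1 else 0 := by
        intro i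
        by_cases hij : i = j
        · subst hij; simp [Xmat]
        · have h2 : (i : ℕ) ≠ (j : ℕ) := fun he => hij (Fin.ext he)
          have h3 : (i : ℕ) ≠ k := Nat.ne_of_lt i.isLt
          simp [Xmat, h2, h3, hij]
      have h4 : Xmat k (Fin.last k) j = -1 := by
        have h5 : k ≠ (j : ℕ) := (Nat.ne_of_lt j.isLt).symm
        simp [Xmat, h5]
      rw [Finset.sum_congr rfl (fun i _ => h1 i), h4, Finset.sum_ite_eq' Finset.univ]
      simp
    have hP : ((1 : Matrix (Fin (k+1)) (Fin (k+1)) ℝ) -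
        Xmat k * ((Xmat k)ᵀ * Xmat k)⁻¹ * (Xmat k)ᵀ) *ᵥ (fun _ => (1 : ℝ)) =
        fun _ => (1 : ℝ) := by
      rw [Matrix.sub_mulVec, Matrix.one_mulVec, ← Matrix.mulVec_mulVec, hXty,
        Matrix.mulVec_zero, sub_zero]
    rw [hsolve, hres, hP]
    have hL : vecNormSqR (fun i => if i = m then -((k : ℝ) + 1) else 0) = ((k : ℝ) + 1) ^ 2 := by
      rw [vecNormSqR]
      have : ∀ i : Fin (k+1), (if i = m then -((k : ℝ) + 1) else 0) ^ 2 =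
          if i = m then ((k : ℝ) + 1) ^ 2 else 0 := by
        intro i; split_ifs <;> ring
      rw [Finset.sum_congr rfl (fun i _ => this i), Finset.sum_ite_eq' Finset.univ]
      simp
    have hR : vecNormSqR (fun _ : Fin (k+1) => (1 : ℝ)) = (k : ℝ) + 1 := by
      simp [vecNormSqR]
    rw [hL, hR]
    push_cast
    ring
end

section
/- In the RejectionRPQR setting with Q ∈ ℂ^{m×k} orthonormal and i columns already selected spanning projector Π, the probability of acceptance in a single rejection-sampling round (proposal t drawn with P{t=j} = ℓ_j/k, accepted with probability ‖(I−Π)Q*(:,t)‖²/ℓ_t) equals (k−i)/k. -/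
open Matrix Finset

/-- Single-round acceptance probability in RejectionRPQR: with `Q ∈ ℂ^{m×k}` orthonormal,
`Π` the orthogonal projector onto the span of `i < k` linearly independent selected columns
of `Q*`, leverage scores `ℓ_j = ‖Q(j,:)‖²`, proposal `t` drawn with `P{t=j} = ℓ_j/k` and
accepted with probability `‖(I−Π)Q*(:,t)‖²/ℓ_t`, the probability of acceptance equals
`(k−i)/k`. -/
theorem rejection_round_acceptance (m k i : ℕ) (hik : i < k)
    (Q : Matrix (Fin m) (Fin k) ℂ) (hQ : Qᴴ * Q = 1)
    (S : Finset (Fin m)) (hS : S.card = i)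
    (P : Matrix (Fin k) (Fin k) ℂ)
    (hProj : P * P = P) (hHerm : Pᴴ = P)
    (hfix : ∀ j ∈ S, P *ᵥ (fun a => Qᴴ a j) = (fun a => Qᴴ a j))
    (hrange : ∀ v : Fin k → ℂ,
      P *ᵥ v ∈ Submodule.span ℂ {w : Fin k → ℂ | ∃ j ∈ S, w = fun a => Qᴴ a j})
    (hindep : LinearIndependent ℂ (fun j : S => (fun a => Qᴴ a (j : Fin m)) : S → Fin k → ℂ)) :
    (∑ j : Fin m,
        ((∑ a, ‖Q j a‖ ^ 2) / k) *
          ((∑ a, ‖((1 - P) *ᵥ (fun a => Qᴴ a j)) a‖ ^ 2) /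
            (∑ a, ‖Q j a‖ ^ 2))) =
      ((k : ℝ) - i) / k := by
  -- trace P = i
  have htrP : P.trace = (i : ℂ) := by
    set T : Set (Fin k → ℂ) := {w : Fin k → ℂ | ∃ j ∈ S, w = fun a => Qᴴ a j} with hT
    have hTr : T = Set.range (fun j : S => (fun a => Qᴴ a (j : Fin m)) : S → Fin k → ℂ) := by
      ext w; simp [hT, eq_comm]
    have hproj : LinearMap.IsProj (Submodule.span ℂ T) P.mulVecLin := by
      refine ⟨fun x => hrange x, ?_⟩
      intro x hx
      induction hx using Submodule.span_induction with
      | mem w hw => obtain ⟨j, hj, rfl⟩ := hw; exact hfix j hj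
      | zero => simp [Matrix.mulVecLin_apply]
      | add a b _ _ ha hb => simp [Matrix.mulVecLin_apply, Matrix.mulVec_add] at *; rw [ha, hb]
      | smul c a _ ha => simp [Matrix.mulVecLin_apply, Matrix.mulVec_smul] at *; rw [ha]
    have hfr : Module.finrank ℂ (Submodule.span ℂ T) = i := by
      rw [hTr, finrank_span_eq_card hindep, Fintype.card_coe, hS]
    have htr := hproj.trace
    rw [hfr] at htr
    rw [← htr, LinearMap.trace_eq_matrix_trace ℂ (Pi.basisFun ℂ (Fin k))]
    congr 1
    ext a b
    simp [LinearMap.toMatrix_apply, Matrix.mulVec, dotProduct, Pi.single_apply]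
  set R : Matrix (Fin k) (Fin k) ℂ := 1 - P with hR
  set N : Fin m → ℝ := fun j => ∑ a, ‖(R *ᵥ (fun a => Qᴴ a j)) a‖ ^ 2 with hN
  -- each term equals N j / k
  have hterm : ∀ j : Fin m,
      ((∑ a, ‖Q j a‖ ^ 2) / k) *
          ((∑ a, ‖(R *ᵥ (fun a => Qᴴ a j)) a‖ ^ 2) /
            (∑ a, ‖Q j a‖ ^ 2)) = N j / k := by
    intro j
    by_cases hz : (∑ a, ‖Q j a‖ ^ 2) = 0
    · have hQ0 : ∀ a, Q j a = 0 := by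
        intro a
        have hnn : ∀ a ∈ Finset.univ, (0:ℝ) ≤ ‖Q j a‖ ^ 2 := fun a _ => sq_nonneg _
        have := (Finset.sum_eq_zero_iff_of_nonneg hnn).mp hz a (Finset.mem_univ a)
        simpa using this
      have hq0 : (fun a => Qᴴ a j) = (0 : Fin k → ℂ) := by
        funext a; simp [Matrix.conjTranspose_apply, hQ0 a]
      have hN0 : N j = 0 := by
        show (∑ a, ‖(R *ᵥ (fun a => Qᴴ a j)) a‖ ^ 2) = 0
        rw [hq0, Matrix.mulVec_zero]
        simp
      rw [hz, hN0]
      simp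
    · rw [div_mul_div_comm, mul_comm (k:ℝ), mul_div_mul_left _ _ hz]
  rw [Finset.sum_congr rfl (fun j _ => hterm j), ← Finset.sum_div]
  -- sum of N equals k - i
  have hsum : (∑ j, N j) = (k : ℝ) - i := by
    have hRH : Rᴴ = R := by rw [hR]; simp [hHerm]
    have hRR : R * Rᴴ = R := by
      rw [hRH, hR]
      simp [sub_mul, mul_sub, hProj]
    have hmat : (R * Qᴴ) * (R * Qᴴ)ᴴ = R := by
      rw [conjTranspose_mul, conjTranspose_conjTranspose, Matrix.mul_assoc,
        ← Matrix.mul_assoc Qᴴ Q Rᴴ, hQ, Matrix.one_mul, hRR]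
    have hc : ((∑ j, N j : ℝ) : ℂ) = ((R * Qᴴ) * (R * Qᴴ)ᴴ).trace := by
      rw [Matrix.trace]
      push_cast [hN]
      rw [Finset.sum_comm]
      refine Finset.sum_congr rfl fun a _ => ?_
      simp only [Matrix.diag_apply, Matrix.mul_apply, Matrix.conjTranspose_apply]
      refine Finset.sum_congr rfl fun j _ => ?_
      have habs : ∀ z : ℂ, ((‖z‖ : ℝ) : ℂ) ^ 2 = z * star z := by
        intro z
        rw [Complex.star_def, Complex.mul_conj, Complex.normSq_eq_norm_sq]
        push_cast
        ring
      have hw : (R *ᵥ fun a => star (Q j a)) a = ∑ x, R a x * star (Q j x) := rfl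
      rw [hw, habs]
    rw [hmat, hR, Matrix.trace_sub, Matrix.trace_one, htrP] at hc
    have : ((∑ j, N j : ℝ) : ℂ) = (((k : ℝ) - i : ℝ) : ℂ) := by
      rw [hc]; push_cast; simp
    exact_mod_cast this
  rw [hsum]
end
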